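/- Let Γ be a positive monoid (i.e., γ₁γ₂ = ε implies γ₁ = ε and γ₂ = ε) and A a Γ-graded algebra with unity in A_ε. If m is a maximal graded left ideal of A, then m = m_ε ⊕ ⨁_{γ≠ε} A_γ, where m_ε = m ∩ A_ε is a maximal left ideal of A_ε. -/

import Mathlib

/-- A maximal graded left ideal of a positively graded algebra decomposes as
`m = m_ε ⊕ ⨁_{γ ≠ ε} A_γ`, with `m_ε = m ∩ A_ε` a maximal left ideal of `A_ε`. -/
theorem stmt0 {K : Type*} [Field K] {Γ : Type*} [AddMonoid Γ] [DecidableEq Γ]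
    {A : Type*} [Ring A] [Algebra K A] (𝒜 : Γ → Submodule K A) [GradedAlgebra 𝒜]
    (hpos : ∀ γ₁ γ₂ : Γ, γ₁ + γ₂ = 0 → γ₁ = 0 ∧ γ₂ = 0)
    (m : Ideal A) (hgr : m.IsHomogeneous 𝒜)
    (hproper : m ≠ ⊤)
    (hmax : ∀ I : Ideal A, I.IsHomogeneous 𝒜 → m < I → I = ⊤) :
    -- `m` contains every component of degree ≠ ε, so `m = (m ∩ A_ε) ⊕ ⨁_{γ ≠ ε} A_γ`
    (∀ γ : Γ, γ ≠ 0 → (𝒜 γ : Set A) ⊆ (m : Set A)) ∧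
    -- `m_ε = m ∩ A_ε` is a proper left ideal of `A_ε` ...
    (1 : A) ∉ (m.restrictScalars K ⊓ 𝒜 0) ∧
    -- ... which is maximal among proper left ideals of `A_ε`
    (∀ n : Submodule K A, n ≤ 𝒜 0 → (∀ a ∈ 𝒜 0, ∀ x ∈ n, a * x ∈ n) →
      (1 : A) ∉ n → (m.restrictScalars K ⊓ 𝒜 0) ≤ n →
      n = m.restrictScalars K ⊓ 𝒜 0) := by
  classical
  -- the set of homogeneous elements of nonzero degree
  set S : Set A := {x | ∃ γ : Γ, γ ≠ 0 ∧ x ∈ 𝒜 γ} with hS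
  set J0 : Ideal A := Ideal.span S with hJ0def
  -- products `a * b` with `b` homogeneous of nonzero degree have zero degree-0 component
  have hmul_ne : ∀ (γ : Γ), γ ≠ 0 → ∀ b ∈ 𝒜 γ, ∀ a : A,
      (DirectSum.decompose 𝒜 (a * b) 0 : A) = 0 := by
    intro γ hγ b hb a
    induction a using DirectSum.Decomposition.inductionOn 𝒜 with
    | zero => simp
    | @homogeneous δ x =>
        have hmem : (x : A) * b ∈ 𝒜 (δ + γ) := SetLike.mul_mem_graded x.2 hb
        have hne : δ + γ ≠ 0 := fun h => hγ (hpos δ γ h).2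
        exact DirectSum.decompose_of_mem_ne 𝒜 hmem hne
    | add x y hx hy =>
        rw [add_mul, DirectSum.decompose_add, DirectSum.add_apply]
        push_cast
        rw [hx, hy, add_zero]
  -- hence every element of `J0` has zero degree-0 component
  have hJ0proj : ∀ x ∈ J0, (DirectSum.decompose 𝒜 x 0 : A) = 0 := by
    intro x hx
    have key : ∀ x, x ∈ J0 → ∀ a : A, (DirectSum.decompose 𝒜 (a * x) 0 : A) = 0 := by
      intro x hx
      induction hx using Submodule.span_induction with
      | mem s hs =>
          obtain ⟨γ, hγ, hsγ⟩ := hs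
          exact fun a => hmul_ne γ hγ s hsγ a
      | zero => intro a; simp
      | add x y hx hy hx' hy' =>
          intro a
          rw [mul_add, DirectSum.decompose_add, DirectSum.add_apply]
          push_cast
          rw [hx' a, hy' a, add_zero]
      | smul c x hx hx' =>
          intro a
          have : a * (c • x) = (a * c) * x := by
            rw [smul_eq_mul, mul_assoc]
          rw [this, hx' (a * c)]
    have := key x hx 1
    rwa [one_mul] at this
  have hJ0hom : J0.IsHomogeneous 𝒜 := by
    refine Ideal.homogeneous_span 𝒜 S fun x hx => ?_
    obtain ⟨γ, _, hxγ⟩ := hx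
    exact ⟨γ, hxγ⟩
  have hone : (1 : A) ∈ 𝒜 0 := SetLike.one_mem_graded 𝒜
  have hproj1 : (DirectSum.decompose 𝒜 (1 : A) 0 : A) = 1 :=
    DirectSum.decompose_of_mem_same 𝒜 hone
  have h1m : (1 : A) ∉ m := fun h => hproper (Ideal.eq_top_iff_one m |>.mpr h)
  -- Part 1: every nonzero-degree component is in m
  have part1 : ∀ γ : Γ, γ ≠ 0 → (𝒜 γ : Set A) ⊆ (m : Set A) := by
    have hsup : m ⊔ J0 = m := by
      by_contra hne
      have hlt : m < m ⊔ J0 := lt_of_le_of_ne le_sup_left (fun h => hne h.symm)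
      have htop := hmax (m ⊔ J0) (hgr.sup hJ0hom) hlt
      have h1 : (1 : A) ∈ m ⊔ J0 := htop ▸ Submodule.mem_top
      obtain ⟨x, hx, y, hy, hxy⟩ := Submodule.mem_sup.mp h1
      have : (DirectSum.decompose 𝒜 (1 : A) 0 : A)
          = (DirectSum.decompose 𝒜 x 0 : A) + (DirectSum.decompose 𝒜 y 0 : A) := by
        rw [← hxy, DirectSum.decompose_add, DirectSum.add_apply]; push_cast; ring
      rw [hproj1, hJ0proj y hy, add_zero] at this
      exact h1m (this ▸ hgr 0 hx)
    intro γ hγ x hx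
    have hxJ0 : x ∈ J0 := Ideal.subset_span ⟨γ, hγ, hx⟩
    exact hsup ▸ Submodule.mem_sup_right hxJ0
  refine ⟨part1, fun h => h1m h.1, ?_⟩
  -- Part 3: maximality of m₀ = m ⊓ 𝒜 0
  intro n hn0 hmuln h1n hm0n
  -- for `y` in the A-span of `n`, the degree-0 component lies in `n`
  have hspan_proj : ∀ y ∈ Ideal.span (n : Set A), (DirectSum.decompose 𝒜 y 0 : A) ∈ n := by
    intro y hy
    have key : ∀ y, y ∈ Ideal.span (n : Set A) →
        ∀ a : A, (DirectSum.decompose 𝒜 (a * y) 0 : A) ∈ n := by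
      intro y hy
      induction hy using Submodule.span_induction with
      | mem s hs =>
          intro a
          induction a using DirectSum.Decomposition.inductionOn 𝒜 with
          | zero => simpa using n.zero_mem
          | @homogeneous δ x =>
              by_cases hδ : δ = 0
              · subst hδ
                have hmem : (x : A) * s ∈ 𝒜 0 := by
                  simpa using SetLike.mul_mem_graded x.2 (hn0 hs)
                rw [DirectSum.decompose_of_mem_same 𝒜 hmem]
                exact hmuln x x.2 s hs
              · have hmem : (x : A) * s ∈ 𝒜 (δ + 0) := SetLike.mul_mem_graded x.2 (hn0 hs)
                rw [DirectSum.decompose_of_mem_ne 𝒜 hmem (by simpa using hδ)]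
                exact n.zero_mem
          | add x y hx hy =>
              rw [add_mul, DirectSum.decompose_add, DirectSum.add_apply]
              push_cast
              exact n.add_mem hx hy
      | zero => intro a; simpa using n.zero_mem
      | add x y hx hy hx' hy' =>
          intro a
          rw [mul_add, DirectSum.decompose_add, DirectSum.add_apply]
          push_cast
          exact n.add_mem (hx' a) (hy' a)
      | smul c x hx hx' =>
          intro a
          have : a * (c • x) = (a * c) * x := by rw [smul_eq_mul, mul_assoc]
          rw [this]
          exact hx' (a * c)
    have := key y hy 1
    rwa [one_mul] at this
  set N : Ideal A := Ideal.span (n : Set A) ⊔ J0 with hNdef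
  have hNhom : N.IsHomogeneous 𝒜 := by
    refine (Ideal.homogeneous_span 𝒜 (n : Set A) fun x hx => ⟨0, hn0 hx⟩).sup hJ0hom
  have hNproj : ∀ x ∈ N, (DirectSum.decompose 𝒜 x 0 : A) ∈ n := by
    intro x hx
    obtain ⟨y, hy, z, hz, hyz⟩ := Submodule.mem_sup.mp hx
    have : (DirectSum.decompose 𝒜 x 0 : A)
        = (DirectSum.decompose 𝒜 y 0 : A) + (DirectSum.decompose 𝒜 z 0 : A) := by
      rw [← hyz, DirectSum.decompose_add, DirectSum.add_apply]; push_cast; ring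
    rw [this, hJ0proj z hz, add_zero]
    exact hspan_proj y hy
  have hNproper : N ≠ ⊤ := by
    intro h
    have h1 : (1 : A) ∈ N := h ▸ Submodule.mem_top
    have := hNproj 1 h1
    rw [hproj1] at this
    exact h1n this
  have hmN : m ≤ N := by
    intro x hx
    rw [← DirectSum.sum_support_decompose 𝒜 x]
    refine Submodule.sum_mem _ fun γ _ => ?_
    by_cases hγ : γ = 0
    · subst hγ
      have hx0 : (DirectSum.decompose 𝒜 x 0 : A) ∈ m.restrictScalars K ⊓ 𝒜 0 :=
        ⟨hgr 0 hx, SetLike.coe_mem _⟩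
      exact Submodule.mem_sup_left (Ideal.subset_span (hm0n hx0))
    · exact Submodule.mem_sup_right (Ideal.subset_span ⟨γ, hγ, SetLike.coe_mem _⟩)
  have hNm : N = m := by
    by_contra hne
    exact hNproper (hmax N hNhom (lt_of_le_of_ne hmN (fun h => hne h.symm)))
  apply le_antisymm
  · intro x hx
    refine ⟨?_, hn0 hx⟩
    have : x ∈ N := Submodule.mem_sup_left (Ideal.subset_span hx)
    exact hNm ▸ this
  · exact hm0n
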